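/- For every y ∈ (−1,1), ∑_{j=0}^{∞} y^j · ζ̂(j) = B(1/2, 1−y, 1+y), where ζ̂(0) = 1/2, ζ̂(j) = ∑_{n=1}^{∞} (−1)^{n−1}/n^j for j ≥ 1, and B(x,a,b) = ∫_0^x t^{a−1}(1−t)^{b−1} dt is the incomplete beta function; the series on the left converges for |y| < 1. -/

import Mathlib

open Filter

open MeasureTheory Set Real Nat

noncomputable def Gf (x : ℝ) : ℝ := Real.exp (-x) / (1 + Real.exp (-x)) ^ 2
lemma Gf_pos (x : ℝ) : 0 < Gf x := by unfold Gf; positivity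
lemma Gf_le (x : ℝ) : Gf x ≤ Real.exp (-x) := by
  unfold Gf
  rw [div_le_iff₀ (by positivity)]
  nlinarith [Real.exp_pos (-x), sq_nonneg (Real.exp (-x))]
lemma Gf_cont : Continuous Gf := by
  unfold Gf
  exact (Real.continuous_exp.comp continuous_neg).div
    (((continuous_const.add (Real.continuous_exp.comp continuous_neg)).pow 2))
    (fun x => by positivity)

lemma Gf_int : IntegrableOn Gf (Ioi (0:ℝ)) := by
  have h : IntegrableOn (fun x => Real.exp (-x)) (Ioi (0:ℝ)) := by
    have := exp_neg_integrableOn_Ioi (0:ℝ) (b := 1) one_pos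
    simpa using this
  refine h.integrable.mono Gf_cont.aestronglyMeasurable ?_
  filter_upwards with x
  rw [Real.norm_eq_abs, Real.norm_eq_abs, abs_of_pos (Gf_pos x), abs_of_pos (Real.exp_pos _)]
  exact Gf_le x

lemma Gf_deriv (x : ℝ) : HasDerivAt (fun x => (1 + Real.exp (-x))⁻¹) (Gf x) x := by
  have h1 : HasDerivAt (fun x : ℝ => 1 + Real.exp (-x)) (Real.exp (-x) * (-1)) x :=
    (((hasDerivAt_neg x)).exp).const_add 1
  have h2 := h1.inv (by positivity)
  refine h2.congr_deriv ?_
  unfold Gf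
  ring

lemma Gf_M0 : ∫ x in Ioi (0:ℝ), Gf x = 1/2 := by
  have h := integral_Ioi_of_hasDerivAt_of_tendsto (f := fun x => (1 + Real.exp (-x))⁻¹)
    (f' := Gf) (a := 0) (m := 1)
    (Gf_deriv 0).continuousAt.continuousWithinAt
    (fun x _ => Gf_deriv x) Gf_int ?_
  · rw [h]; norm_num
  · have : Tendsto (fun x : ℝ => 1 + Real.exp (-x)) atTop (nhds 1) := by
      simpa using (tendsto_const_nhds.add (Real.tendsto_exp_neg_atTop_nhds_zero))
    simpa using this.inv₀ (by norm_num)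


lemma psum_closed (w : ℝ) (N : ℕ) :
    (∑ n ∈ Finset.range N, (-1:ℝ)^n * ((n:ℝ)+1) * w^n) * (1+w)^2
      = 1 - (-w)^N * (1 + (N:ℝ)*(1+w)) := by
  induction N with
  | zero => simp
  | succ N ih =>
    rw [Finset.sum_range_succ, add_mul, ih]
    push_cast
    ring

lemma moment (k : ℕ) {r : ℝ} (hr : 0 < r) :
    ∫ x in Ioi (0:ℝ), x ^ k * Real.exp (-(r * x)) = (k ! : ℝ) / r ^ (k + 1) := by
  have h := Real.integral_rpow_mul_exp_neg_mul_Ioi (a := (k:ℝ) + 1) (by positivity) hr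
  have h1 : ∀ x ∈ Ioi (0:ℝ), x ^ ((k:ℝ) + 1 - 1) * Real.exp (-(r * x))
      = x ^ k * Real.exp (-(r * x)) := by
    intro x hx
    rw [show (k:ℝ) + 1 - 1 = (k:ℝ) by ring, Real.rpow_natCast]
  rw [setIntegral_congr_fun measurableSet_Ioi h1] at h
  rw [h, Real.Gamma_nat_eq_factorial,
    show ((k:ℝ)+1) = ((k+1:ℕ):ℝ) by push_cast; ring, Real.rpow_natCast, one_div, inv_pow]
  ring

lemma intOn (k : ℕ) {r : ℝ} (hr : 1 ≤ r) :
    IntegrableOn (fun x => x ^ k * Real.exp (-(r * x))) (Ioi (0:ℝ)) := by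
  have base : IntegrableOn (fun x => x ^ k * Real.exp (-x)) (Ioi (0:ℝ)) := by
    have h := Real.GammaIntegral_convergent (s := (k:ℝ) + 1) (by positivity)
    apply h.congr_fun ?_ measurableSet_Ioi
    intro x hx
    simp only
    rw [show (k:ℝ) + 1 - 1 = (k:ℝ) by ring, Real.rpow_natCast, mul_comm]
  refine base.integrable.mono ?_ ?_
  · exact ((continuous_pow k).mul ((Real.continuous_exp.comp (continuous_neg.comp
      (continuous_const.mul continuous_id))))).aestronglyMeasurable
  · filter_upwards [ae_restrict_mem measurableSet_Ioi] with x hx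
    have hx0 : (0:ℝ) < x := hx
    simp only [Real.norm_eq_abs, abs_mul, abs_pow]
    rw [abs_of_pos hx0, abs_of_pos (Real.exp_pos _), abs_of_pos (Real.exp_pos _)]
    have : Real.exp (-(r*x)) ≤ Real.exp (-x) := by
      apply Real.exp_le_exp.2; nlinarith
    exact mul_le_mul_of_nonneg_left this (by positivity)

lemma zh_int (k : ℕ) (hk : 1 ≤ k) (z : ℝ)
    (hz : Tendsto (fun N => ∑ j ∈ Finset.range N, (-1 : ℝ) ^ j / ((j : ℝ) + 1) ^ k) atTop
      (nhds z)) :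
    (k ! : ℝ) * z = ∫ x in Ioi (0:ℝ), x ^ k * Gf x := by
  have hFint : ∀ N : ℕ, (∫ x in Ioi (0:ℝ),
      ∑ n ∈ Finset.range N, (-1:ℝ)^n * ((n:ℝ)+1) * (x^k * Real.exp (-(((n:ℝ)+1) * x))))
      = (k ! : ℝ) * ∑ j ∈ Finset.range N, (-1:ℝ)^j/((j:ℝ)+1)^k := by
    intro N
    rw [integral_finset_sum]
    · rw [Finset.mul_sum]
      refine Finset.sum_congr rfl fun n _ => ?_
      rw [integral_const_mul, moment k (show (0:ℝ) < (n:ℝ)+1 by positivity)]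
      have hn : ((n:ℝ)+1) ≠ 0 := by positivity
      rw [pow_succ]
      field_simp
    · intro n _
      exact ((intOn k (show (1:ℝ) ≤ (n:ℝ)+1 by simp)).const_mul _)
  have key : ∀ x : ℝ, 0 < x → ∀ N : ℕ,
      (∑ n ∈ Finset.range N, (-1:ℝ)^n * ((n:ℝ)+1) * (x^k * Real.exp (-(((n:ℝ)+1) * x))))
      = (x^k * Real.exp (-x)) *
        ((1 - (-Real.exp (-x))^N * (1 + (N:ℝ)*(1+Real.exp (-x)))) / (1+Real.exp (-x))^2) := by
    intro x hx N
    have hstep : (∑ n ∈ Finset.range N, (-1:ℝ)^n * ((n:ℝ)+1) * (x^k * Real.exp (-(((n:ℝ)+1) * x))))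
        = (x^k * Real.exp (-x)) *
          ∑ n ∈ Finset.range N, (-1:ℝ)^n * ((n:ℝ)+1) * (Real.exp (-x))^n := by
      rw [Finset.mul_sum]
      refine Finset.sum_congr rfl fun n _ => ?_
      rw [show -(((n:ℝ)+1)*x) = -x + (n:ℝ)*(-x) by ring, Real.exp_add, Real.exp_nat_mul]
      ring
    rw [hstep]
    congr 1
    rw [eq_div_iff (by positivity), psum_closed]
  have hdct := MeasureTheory.tendsto_integral_of_dominated_convergence
    (μ := volume.restrict (Ioi (0:ℝ)))
    (F := fun N x => ∑ n ∈ Finset.range N, (-1:ℝ)^n * ((n:ℝ)+1) *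
      (x^k * Real.exp (-(((n:ℝ)+1) * x))))
    (f := fun x => x^k * Gf x)
    (bound := fun x => 2*(x^k*Real.exp (-x)) + 2*(x^(k-1)*Real.exp (-x)))
    (fun N => Continuous.aestronglyMeasurable (continuous_finset_sum _ fun n _ =>
      continuous_const.mul ((continuous_pow k).mul
        (Real.continuous_exp.comp (continuous_neg.comp (continuous_const.mul continuous_id))))))
    ?_ ?_ ?_
  · have h2 := hz.const_mul ((k ! : ℝ))
    have h3 := hdct.congr hFint
    exact tendsto_nhds_unique h2 h3
  · -- bound integrable
    have i1 : IntegrableOn (fun x => x^k * Real.exp (-x)) (Ioi (0:ℝ)) := by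
      have := intOn k (le_refl (1:ℝ)); simpa using this
    have i2 : IntegrableOn (fun x => x^(k-1) * Real.exp (-x)) (Ioi (0:ℝ)) := by
      have := intOn (k-1) (le_refl (1:ℝ)); simpa using this
    exact (i1.const_mul 2).add (i2.const_mul 2)
  · -- h_bound
    intro N
    filter_upwards [ae_restrict_mem measurableSet_Ioi] with x hx
    have hx0 : (0:ℝ) < x := hx
    set w := Real.exp (-x) with hwdef
    have hw0 : 0 < w := Real.exp_pos _
    have hw1 : w < 1 := by
      rw [hwdef, show (1:ℝ) = Real.exp 0 by rw [Real.exp_zero]]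
      exact Real.exp_lt_exp.2 (by linarith)
    have hNw : (N:ℝ) * w^N ≤ 1/x := by
      have h1 : (N:ℝ)*x ≤ Real.exp ((N:ℝ)*x) := by
        linarith [Real.add_one_le_exp ((N:ℝ)*x)]
      have h2 : w^N = (Real.exp ((N:ℝ)*x))⁻¹ := by
        rw [hwdef, ← Real.exp_nat_mul, ← Real.exp_neg]
        ring_nf
      rw [h2, le_div_iff₀ hx0]
      have he : (0:ℝ) < Real.exp ((N:ℝ)*x) := Real.exp_pos _
      have hinv : Real.exp ((N:ℝ)*x) * (Real.exp ((N:ℝ)*x))⁻¹ = 1 :=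
        mul_inv_cancel₀ (ne_of_gt he)
      nlinarith [mul_nonneg (sub_nonneg.2 h1) (inv_nonneg.2 he.le)]
    have hA : |(-w)^N * (1+(N:ℝ)*(1+w))| ≤ 1 + 2/x := by
      rw [abs_mul, abs_pow, abs_neg, abs_of_pos hw0, abs_of_pos (by positivity)]
      have h3 : w^N ≤ 1 := pow_le_one₀ hw0.le hw1.le
      have h5 : ((N:ℝ)*w^N)*(1+w) ≤ (1/x)*2 :=
        mul_le_mul hNw (by linarith) (by positivity) (by positivity)
      calc w^N*(1+(N:ℝ)*(1+w)) = w^N + ((N:ℝ)*w^N)*(1+w) := by ring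
        _ ≤ 1 + (1/x)*2 := by linarith
        _ = 1 + 2/x := by ring
    rw [key x hx0 N]
    have hw2 : (1:ℝ) ≤ (1+w)^2 := by nlinarith
    have habs1 : |1 - (-w)^N * (1+(N:ℝ)*(1+w))| ≤ 2 + 2/x := by
      have := abs_sub (1:ℝ) ((-w)^N * (1+(N:ℝ)*(1+w)))
      have h1 : |(1:ℝ)| = 1 := abs_one
      calc |1 - (-w)^N * (1+(N:ℝ)*(1+w))| ≤ |(1:ℝ)| + |(-w)^N * (1+(N:ℝ)*(1+w))| := by
            rw [sub_eq_add_neg]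
            exact (abs_add_le _ _).trans (by rw [abs_neg])
        _ ≤ 1 + (1 + 2/x) := by rw [h1]; linarith
        _ = 2 + 2/x := by ring
    rw [Real.norm_eq_abs, abs_mul, abs_of_pos (show (0:ℝ) < x^k*w by positivity), abs_div,
      abs_of_pos (show (0:ℝ) < (1+w)^2 by positivity)]
    have hdivle : |1 - (-w)^N * (1+(N:ℝ)*(1+w))| / (1+w)^2
        ≤ |1 - (-w)^N * (1+(N:ℝ)*(1+w))| := by
      apply div_le_self (abs_nonneg _) hw2
    have hle2 : x^k*w * (|1 - (-w)^N * (1+(N:ℝ)*(1+w))| / (1+w)^2) ≤ x^k*w * (2 + 2/x) :=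
      mul_le_mul_of_nonneg_left (hdivle.trans habs1) (by positivity)
    refine hle2.trans (le_of_eq ?_)
    have hxk : x^k = x^(k-1)*x := by
      conv_lhs => rw [show k = (k-1)+1 by omega]
      rw [pow_succ]
    rw [hxk]
    field_simp
  · -- h_lim
    filter_upwards [ae_restrict_mem measurableSet_Ioi] with x hx
    have hx0 : (0:ℝ) < x := hx
    set w := Real.exp (-x) with hwdef
    have hw0 : 0 < w := Real.exp_pos _
    have hw1 : w < 1 := by
      rw [hwdef, show (1:ℝ) = Real.exp 0 by rw [Real.exp_zero]]
      exact Real.exp_lt_exp.2 (by linarith)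
    have hnw : ‖-w‖ < 1 := by rw [norm_neg, Real.norm_eq_abs, abs_of_pos hw0]; exact hw1
    have t1 : Tendsto (fun N : ℕ => (-w)^N) atTop (nhds 0) :=
      tendsto_pow_atTop_nhds_zero_of_norm_lt_one hnw
    have t2 : Tendsto (fun N : ℕ => (N:ℝ)*(-w)^N) atTop (nhds 0) := by
      have hs := summable_pow_mul_geometric_of_norm_lt_one 1 hnw
      have := hs.tendsto_atTop_zero
      simpa using this
    have t3 : Tendsto (fun N : ℕ => (-w)^N*(1+(N:ℝ)*(1+w))) atTop (nhds 0) := by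
      have h4 := t1.add (t2.mul_const (1+w))
      simp only [add_zero, zero_mul] at h4
      exact Tendsto.congr (fun N => by ring) h4
    have t4 : Tendsto (fun N : ℕ => (x^k*w)*((1 - (-w)^N*(1+(N:ℝ)*(1+w)))/(1+w)^2)) atTop
        (nhds ((x^k*w)*((1-0)/(1+w)^2))) :=
      ((tendsto_const_nhds.sub t3).div_const _).const_mul _
    have heq : x^k * Gf x = (x^k*w)*((1-0)/(1+w)^2) := by
      unfold Gf
      rw [← hwdef]
      ring
    rw [heq]
    exact Tendsto.congr (fun N => (key x hx0 N).symm) t4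

lemma Gf_symm (x : ℝ) : Gf x = Real.exp x / (1 + Real.exp x) ^ 2 := by
  unfold Gf
  rw [Real.exp_neg]
  have h := Real.exp_pos x
  field_simp
  ring

lemma exp_hasSum (x : ℝ) : HasSum (fun n : ℕ => x ^ n / n !) (Real.exp x) := by
  rw [Real.exp_eq_exp_ℝ]
  exact NormedSpace.expSeries_div_hasSum_exp x

lemma main_hasSum {y : ℝ} (hy : |y| < 1) :
    HasSum (fun j : ℕ => ∫ x in Ioi (0:ℝ), y ^ j * x ^ j / j ! * Gf x)
      (∫ x in Ioi (0:ℝ), Real.exp (y * x) * Gf x) := by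
  refine MeasureTheory.hasSum_integral_of_dominated_convergence
    (bound := fun j x => |y| ^ j * x ^ j / j ! * Real.exp (-x))
    (fun j => (Continuous.aestronglyMeasurable (by
      exact ((continuous_const.mul (continuous_pow j)).div_const _).mul Gf_cont)))
    ?_ ?_ ?_ ?_
  · intro j
    filter_upwards [ae_restrict_mem measurableSet_Ioi] with x hx
    have hx0 : (0:ℝ) < x := hx
    rw [Real.norm_eq_abs, abs_mul, abs_div, abs_mul, abs_pow, abs_pow, abs_of_pos hx0,
      abs_of_pos (Gf_pos x), abs_of_nonneg (by positivity : (0:ℝ) ≤ (j ! : ℝ))]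
    exact mul_le_mul_of_nonneg_left (Gf_le x) (by positivity)
  · filter_upwards [ae_restrict_mem measurableSet_Ioi] with x hx
    have hx0 : (0:ℝ) < x := hx
    have hs := (Real.summable_pow_div_factorial (|y| * x)).mul_right (Real.exp (-x))
    refine hs.congr fun j => ?_
    rw [mul_pow]
  · have heq : ∀ x : ℝ, (∑' j : ℕ, |y| ^ j * x ^ j / j ! * Real.exp (-x))
        = Real.exp (-((1 - |y|) * x)) := by
      intro x
      have h1 : HasSum (fun j : ℕ => |y| ^ j * x ^ j / j ! * Real.exp (-x))
          (Real.exp (|y| * x) * Real.exp (-x)) := by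
        have h := (exp_hasSum (|y| * x)).mul_right (Real.exp (-x))
        have h2 : (fun j : ℕ => (|y| * x) ^ j / j ! * Real.exp (-x))
            = fun j : ℕ => |y| ^ j * x ^ j / j ! * Real.exp (-x) := by
          funext j; rw [mul_pow]
        rwa [h2] at h
      rw [h1.tsum_eq, ← Real.exp_add]
      congr 1
      ring
    have hint : IntegrableOn (fun x : ℝ => Real.exp (-(1 - |y|) * x)) (Ioi (0:ℝ)) :=
      exp_neg_integrableOn_Ioi 0 (by linarith)
    refine (hint.integrable.congr ?_)
    filter_upwards with x
    rw [neg_mul]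
    exact (heq x).symm
  · filter_upwards [ae_restrict_mem measurableSet_Ioi] with x hx
    have h := (exp_hasSum (y * x)).mul_right (Gf x)
    have h2 : (fun j : ℕ => (y * x) ^ j / j ! * Gf x)
        = fun j : ℕ => y ^ j * x ^ j / j ! * Gf x := by
      funext j; rw [mul_pow]
    rwa [h2] at h


lemma subst (y : ℝ) :
    ∫ t in (0:ℝ)..(1/2), t ^ (1 - y - 1) * (1 - t) ^ (1 + y - 1)
      = ∫ x in Ioi (0:ℝ), Real.exp (y * x) * Gf x := by
  have himg : (fun x : ℝ => (1 + Real.exp x)⁻¹) '' (Ioi 0) = Ioo 0 (1/2) := by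
    ext t
    constructor
    · rintro ⟨x, hx, rfl⟩
      have hx0 : (0:ℝ) < x := hx
      have he : (1:ℝ) < Real.exp x := by
        rw [show (1:ℝ) = Real.exp 0 by rw [Real.exp_zero]]
        exact Real.exp_lt_exp.2 hx0
      refine ⟨by positivity, ?_⟩
      rw [show (1:ℝ)/2 = (2:ℝ)⁻¹ by norm_num]
      exact inv_strictAnti₀ (by norm_num) (by linarith)
    · rintro ⟨ht0, ht2⟩
      refine ⟨Real.log ((1-t)/t), ?_, ?_⟩
      · apply Real.log_pos
        rw [one_lt_div ht0]
        linarith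
      · simp only
        rw [Real.exp_log (div_pos (by linarith) ht0)]
        have h5 : 1 + (1-t)/t = t⁻¹ := by field_simp; ring
        rw [h5, inv_inv]
  have hinj : InjOn (fun x : ℝ => (1 + Real.exp x)⁻¹) (Ioi 0) := by
    intro a ha b hb hab
    simp only at hab
    have h1 : (0:ℝ) < 1 + Real.exp a := by positivity
    have h2 : (0:ℝ) < 1 + Real.exp b := by positivity
    field_simp at hab
    exact Real.exp_injective (by linarith)
  have hderiv : ∀ x ∈ Ioi (0:ℝ), HasDerivWithinAt (fun x : ℝ => (1 + Real.exp x)⁻¹)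
      (-(Real.exp x / (1 + Real.exp x)^2)) (Ioi 0) x := by
    intro x _
    have h := ((Real.hasDerivAt_exp x).const_add 1).inv (by positivity)
    have h2 : -Real.exp x / (1 + Real.exp x)^2 = -(Real.exp x / (1 + Real.exp x)^2) := by
      ring
    rw [h2] at h
    exact h.hasDerivWithinAt
  rw [intervalIntegral.integral_of_le (by norm_num : (0:ℝ) ≤ 1/2),
    MeasureTheory.integral_Ioc_eq_integral_Ioo, ← himg,
    integral_image_eq_integral_abs_deriv_smul measurableSet_Ioi hderiv hinj]
  refine setIntegral_congr_fun measurableSet_Ioi fun x hx => ?_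
  have hex : (0:ℝ) < Real.exp x := Real.exp_pos x
  have hep : (0:ℝ) < 1 + Real.exp x := by positivity
  simp only [smul_eq_mul]
  rw [abs_neg, abs_of_pos (by positivity : (0:ℝ) < Real.exp x / (1 + Real.exp x)^2)]
  have h2 : (1:ℝ) - (1+Real.exp x)⁻¹ = Real.exp x/(1+Real.exp x) := by
    field_simp
    ring
  have h3 : ((1+Real.exp x)⁻¹) ^ (1-y-1) = (1+Real.exp x) ^ y := by
    rw [show (1:ℝ)-y-1 = -y by ring, Real.inv_rpow hep.le, Real.rpow_neg hep.le, inv_inv]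
  have h4 : (Real.exp x/(1+Real.exp x)) ^ (1+y-1) = Real.exp (x*y) / (1+Real.exp x)^y := by
    rw [show (1:ℝ)+y-1 = y by ring, Real.div_rpow hex.le hep.le,
      Real.rpow_def_of_pos hex, Real.log_exp]
  rw [h2, h3, h4, Gf_symm]
  have hne : (1+Real.exp x)^y ≠ 0 := ne_of_gt (Real.rpow_pos_of_pos hep y)
  rw [mul_comm x y]
  field_simp


theorem stmt16 (zh : ℕ → ℝ) (h0 : zh 0 = 1 / 2)
    (hz : ∀ k, 1 ≤ k →
      Tendsto (fun N => ∑ j ∈ Finset.range N, (-1 : ℝ) ^ j / ((j : ℝ) + 1) ^ k) atTop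
        (nhds (zh k)))
    (y : ℝ) (hy : y ∈ Set.Ioo (-1 : ℝ) 1) :
    Summable (fun j : ℕ => y ^ j * zh j) ∧
    (∑' j : ℕ, y ^ j * zh j)
      = ∫ t in (0 : ℝ)..(1 / 2), t ^ (1 - y - 1) * (1 - t) ^ (1 + y - 1) := by
  obtain ⟨hy1, hy2⟩ := hy
  have hyabs : |y| < 1 := abs_lt.2 ⟨hy1, hy2⟩
  have hzh : ∀ j : ℕ, zh j = (∫ x in Set.Ioi (0:ℝ), x ^ j * Gf x) / (Nat.factorial j) := by
    intro j
    rcases Nat.eq_zero_or_pos j with h | h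
    · subst h
      simp only [pow_zero, one_mul, Nat.factorial_zero, Nat.cast_one, div_one]
      rw [h0, Gf_M0]
    · have hj := zh_int j h (zh j) (hz j h)
      have hfac : ((Nat.factorial j : ℝ)) ≠ 0 := by positivity
      rw [← hj, mul_div_cancel_left₀ _ hfac]
  have key := main_hasSum hyabs
  have keq : ∀ j : ℕ, (∫ x in Set.Ioi (0:ℝ), y ^ j * x ^ j / (Nat.factorial j) * Gf x)
      = y ^ j * zh j := by
    intro j
    rw [hzh j]
    have hrw : (fun x : ℝ => y ^ j * x ^ j / (Nat.factorial j) * Gf x)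
        = fun x : ℝ => (y ^ j / (Nat.factorial j)) * (x ^ j * Gf x) := by
      funext x; ring
    rw [hrw, MeasureTheory.integral_const_mul]
    ring
  rw [funext keq] at key
  exact ⟨key.summable, by rw [key.tsum_eq, subst y]⟩
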